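/- Let n ≥ 8 be divisible by 4 and d = n/2, let j, k ∈ S = {3,…,d} ∪ {d+3,…,n} with j ≠ k, and let H be a Hamiltonian cycle on the complete graph on vertices 1,…,n containing the five edges {j, d+2}, {d+2, 2}, {2, 1}, {1, d+1}, {d+1, k}. If c_{j,d+2} + c_{d+1,k} − c'_{j',k'} = 1, then H contains an edge {s, t} with s, t ∉ {1, 2, d+1, d+2} such that c'_{s',t'} = c_{s,t} − 2. -/

import Mathlib

set_option maxHeartbeats 1600000
set_option linter.unusedVariables false


/-- Edge length on the graph with `n` vertices labeled `1,…,n`: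
`ℓ(i,j) = min(|i−j|, n−|i−j|)`. -/
def ell (n i j : ℕ) : ℕ := min (Nat.dist i j) (n - Nat.dist i j)

/-- Circlet edge cost with parameters `n` and `d`: `ℓ(i,j)` if `ℓ(i,j)` is odd,
`d − ℓ(i,j)` if even.  The contracted cost `c'` is `cost (n-4) (d-2)`. -/
def cost (n d i j : ℕ) : ℕ := if Odd (ell n i j) then ell n i j else d - ell n i j

/-- Relabeling after contraction: `s' = s − 2` if `s ≤ d` and `s' = s − 4` otherwise. -/
def relabel (d s : ℕ) : ℕ := if s ≤ d then s - 2 else s - 4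


section Aux
open SimpleGraph
variable {V : Type*}

lemma CEaux.countP_or_le {p q r : V → Bool} :
    ∀ (l : List V), (∀ a ∈ l, p a → q a = true ∨ r a = true) →
      l.countP p ≤ l.countP q + l.countP r := by
  intro l
  induction l with
  | nil => simp
  | cons a l ih =>
    intro h
    have H := ih (fun b hb => h b (List.mem_cons_of_mem a hb))
    simp only [List.countP_cons]
    by_cases hp : p a = true
    · rcases h a (List.mem_cons_self) hp with hq | hr
      · rw [if_pos hp, if_pos hq]; split_ifs <;> omega
      · rw [if_pos hp, if_pos hr]; split_ifs <;> omega
    · rw [if_neg hp]; split_ifs <;> omega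

lemma CEaux.count_eq_countP' [DecidableEq V] (x : V) (l : List V) :
    l.countP (fun y => decide (x = y)) = l.count x := by
  rw [List.count]
  apply List.countP_congr
  intro y _
  simp only [decide_eq_true_eq, beq_iff_eq]
  exact eq_comm

lemma CEaux.ham_countP_le_two [DecidableEq V] {G : SimpleGraph V} {v : V} {w : G.Walk v v}
    (hw : w.IsHamiltonianCycle) (x : V) :
    w.edges.countP (fun e => decide (x ∈ e)) ≤ 2 := by
  have hedges : w.edges = w.darts.map SimpleGraph.Dart.edge := rfl
  rw [hedges, List.countP_map]
  have hle := CEaux.countP_or_le (p := (fun e => decide (x ∈ e)) ∘ SimpleGraph.Dart.edge)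
    (q := fun dd => decide (x = dd.fst)) (r := fun dd => decide (x = dd.snd)) w.darts ?_
  · have h1 : w.darts.countP (fun dd => decide (x = dd.fst)) = w.support.dropLast.count x := by
      rw [← w.map_fst_darts, ← CEaux.count_eq_countP', List.countP_map]; rfl
    have h2 : w.darts.countP (fun dd => decide (x = dd.snd)) = w.support.tail.count x := by
      rw [← w.map_snd_darts, ← CEaux.count_eq_countP', List.countP_map]; rfl
    have htail : w.support.tail.count x = 1 :=
      (Walk.isHamiltonianCycle_iff_isCycle_and_support_count_tail_eq_one.mp hw).2 x
    have hdrop : w.support.dropLast.count x ≤ 1 := by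
      have hne : w.support ≠ [] := w.support_ne_nil
      have hsplit := List.dropLast_append_getLast hne
      have hlast : w.support.getLast hne = v := w.getLast_support
      by_cases hxv : x = v
      · subst hxv
        have hc : w.support.count x = 2 := hw.count_support_self
        rw [← hsplit, List.count_append, hlast] at hc
        simp at hc
        omega
      · have hc : w.support.count x = 1 := hw.support_count_of_ne (fun h => hxv h.symm)
        rw [← hsplit, List.count_append] at hc
        omega
    omega
  · intro dd _ hd
    simp only [Function.comp_apply, decide_eq_true_eq] at hd ⊢
    rw [SimpleGraph.Dart.edge] at hd
    exact Sym2.mem_iff'.mp hd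

lemma CEaux.three_le_countP [DecidableEq V] {l : List V} (hn : l.Nodup) {p : V → Bool} {a b c : V}
    (ha : a ∈ l) (hb : b ∈ l) (hc : c ∈ l) (hab : a ≠ b) (hac : a ≠ c) (hbc : b ≠ c)
    (pa : p a) (pb : p b) (pc : p c) : 3 ≤ l.countP p := by
  have hsub : ({a, b, c} : Finset V) ⊆ (l.filter p).toFinset := by
    intro z hz
    simp only [Finset.mem_insert, Finset.mem_singleton] at hz
    rw [List.mem_toFinset, List.mem_filter]
    rcases hz with rfl | rfl | rfl <;> exact ⟨by assumption, by assumption⟩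
  have hcard : ({a, b, c} : Finset V).card = 3 := by
    rw [Finset.card_insert_of_notMem (by simp [hab, hac]),
      Finset.card_insert_of_notMem (by simp [hbc]), Finset.card_singleton]
  have hle := Finset.card_le_card hsub
  rw [List.toFinset_card_of_nodup (hn.filter p)] at hle
  rw [List.countP_eq_length_filter]
  omega

lemma CEaux.walk_parity_sum {G : SimpleGraph V} (f : V → ZMod 2) (g : Sym2 V → ZMod 2)
    (hg : ∀ a b : V, g s(a, b) = f a + f b) :
    ∀ {u v : V} (p : G.Walk u v), (p.edges.map g).sum = f u + f v := by
  intro u v p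
  induction p with
  | nil => simp [CharTwo.add_self_eq_zero]
  | @cons a b c h p ih =>
    simp only [Walk.edges_cons, List.map_cons, List.sum_cons, ih, hg]
    linear_combination (CharTwo.add_self_eq_zero (f b))

end Aux

/-- label of a vertex of `ZMod n` in `{1,…,n}` -/
def CEaux.lab (n : ℕ) (x : ZMod n) : ℕ := if x.val = 0 then n else x.val
/-- parity class -/
def CEaux.chi (d s : ℕ) : ℕ := (s + if d + 3 ≤ s then 1 else 0) % 2
def CEaux.F (n d : ℕ) (x : ZMod n) : ZMod 2 := ((CEaux.chi d (CEaux.lab n x) : ℕ) : ZMod 2)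
def CEaux.gE (n d : ℕ) : Sym2 (ZMod n) → ZMod 2 :=
  Sym2.lift ⟨fun a b => CEaux.F n d a + CEaux.F n d b, fun _ _ => add_comm _ _⟩

lemma CEaux.lab_cast (n : ℕ) [NeZero n] (a : ℕ) (h1 : 1 ≤ a) (h2 : a ≤ n) :
    CEaux.lab n ((a : ℕ) : ZMod n) = a := by
  unfold CEaux.lab
  rw [ZMod.val_natCast]
  have hmod : a % n = if a = n then 0 else a := by
    rcases eq_or_lt_of_le h2 with h | h
    · simp [h]
    · rw [if_neg (by omega), Nat.mod_eq_of_lt h]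
  rw [hmod]
  split_ifs <;> omega

lemma CEaux.cast_lab (n : ℕ) [NeZero n] (x : ZMod n) : ((CEaux.lab n x : ℕ) : ZMod n) = x := by
  unfold CEaux.lab
  split_ifs with h
  · rw [ZMod.natCast_self]; exact ((ZMod.val_eq_zero x).mp h).symm
  · exact ZMod.natCast_rightInverse x

lemma CEaux.lab_bounds (n : ℕ) [NeZero n] (x : ZMod n) :
    1 ≤ CEaux.lab n x ∧ CEaux.lab n x ≤ n := by
  unfold CEaux.lab
  have := ZMod.val_lt x
  split_ifs <;> omega

lemma CEaux.cast_inj (n : ℕ) [NeZero n] (a b : ℕ) (ha1 : 1 ≤ a) (ha2 : a ≤ n)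
    (hb1 : 1 ≤ b) (hb2 : b ≤ n) (h : ((a : ℕ) : ZMod n) = ((b : ℕ) : ZMod n)) : a = b := by
  rw [← CEaux.lab_cast n a ha1 ha2, ← CEaux.lab_cast n b hb1 hb2, h]

lemma CEaux.sym2_ne (n : ℕ) [NeZero n] (a b c e : ℕ) (ha1 : 1 ≤ a) (ha2 : a ≤ n)
    (hb1 : 1 ≤ b) (hb2 : b ≤ n) (hc1 : 1 ≤ c) (hc2 : c ≤ n) (he1 : 1 ≤ e) (he2 : e ≤ n)
    (h : ¬((a = c ∧ b = e) ∨ (a = e ∧ b = c))) :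
    s(((a : ℕ) : ZMod n), ((b : ℕ) : ZMod n)) ≠ s(((c : ℕ) : ZMod n), ((e : ℕ) : ZMod n)) := by
  rw [Ne, Sym2.eq_iff]
  rintro (⟨h1, h2⟩ | ⟨h1, h2⟩)
  · exact h (Or.inl ⟨CEaux.cast_inj n a c ha1 ha2 hc1 hc2 h1,
      CEaux.cast_inj n b e hb1 hb2 he1 he2 h2⟩)
  · exact h (Or.inr ⟨CEaux.cast_inj n a e ha1 ha2 he1 he2 h1,
      CEaux.cast_inj n b c hb1 hb2 hc1 hc2 h2⟩)

lemma cost_comm (n d i j : ℕ) : cost n d i j = cost n d j i := by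
  unfold cost ell; rw [Nat.dist_comm]

/-- contracted cost computation, cross case `a ≤ d < b` -/
lemma cross_ell (d a b : ℕ) (hd4 : 4 ≤ d) (ha1 : 3 ≤ a) (ha2 : a ≤ d)
    (hb1 : d + 3 ≤ b) (hb2 : b ≤ 2*d) :
    (b - a ≤ d → ell (2*d) a b = b - a ∧ ell (2*d-4) (a-2) (b-4) = b - a - 2)
    ∧ (d < b - a → ell (2*d) a b = 2*d - (b-a) ∧ ell (2*d-4) (a-2) (b-4) = 2*d - 2 - (b-a)) := by
  constructor <;> intro h <;> constructor <;> (simp only [ell, Nat.dist]; omega)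

lemma arith1 (d a b : ℕ) (hd2 : 2 ∣ d) (hd4 : 4 ≤ d)
    (ha : (3 ≤ a ∧ a ≤ d) ∨ (d + 3 ≤ a ∧ a ≤ 2*d))
    (hb : (3 ≤ b ∧ b ≤ d) ∨ (d + 3 ≤ b ∧ b ≤ 2*d))
    (hab : a ≠ b)
    (hχ : (a + (if a ≤ d then 0 else 1) + (b + (if b ≤ d then 0 else 1))) % 2 = 0) :
    cost (2*d) d a b = cost (2*d - 4) (d - 2) (relabel d a) (relabel d b) + 2 := by
  have key : ∀ x y : ℕ, 3 ≤ x → x ≤ d → d + 3 ≤ y → y ≤ 2*d → (x + y) % 2 = 1 →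
      cost (2*d) d x y = cost (2*d - 4) (d - 2) (relabel d x) (relabel d y) + 2 := by
    intro x y hx1 hx2 hy1 hy2 hp
    rw [relabel, if_pos hx2, relabel, if_neg (by omega)]
    rcases le_or_gt (y - x) d with h | h
    · obtain ⟨e1, e2⟩ := (cross_ell d x y hd4 hx1 hx2 hy1 hy2).1 h
      simp only [cost, e1, e2, Nat.odd_iff]
      split_ifs <;> omega
    · obtain ⟨e1, e2⟩ := (cross_ell d x y hd4 hx1 hx2 hy1 hy2).2 h
      simp only [cost, e1, e2, Nat.odd_iff]
      split_ifs <;> omega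
  rcases ha with ⟨ha1, ha2⟩ | ⟨ha1, ha2⟩ <;> rcases hb with ⟨hb1, hb2⟩ | ⟨hb1, hb2⟩
  · rw [if_pos ha2, if_pos hb2] at hχ
    rw [relabel, if_pos ha2, relabel, if_pos hb2]
    have e1 : ell (2*d) a b = Nat.dist a b := by simp only [ell, Nat.dist]; omega
    have e2 : ell (2*d-4) (a-2) (b-2) = Nat.dist a b := by simp only [ell, Nat.dist]; omega
    simp only [cost, e1, e2, Nat.odd_iff, Nat.dist]
    split_ifs <;> omega
  · rw [if_pos ha2, if_neg (by omega)] at hχ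
    exact key a b ha1 ha2 hb1 hb2 (by omega)
  · rw [if_neg (by omega), if_pos hb2] at hχ
    rw [cost_comm (2*d), cost_comm (2*d-4)]
    exact key b a hb1 hb2 ha1 ha2 (by omega)
  · rw [if_neg (by omega), if_neg (by omega)] at hχ
    rw [relabel, if_neg (by omega), relabel, if_neg (by omega)]
    have e1 : ell (2*d) a b = Nat.dist a b := by simp only [ell, Nat.dist]; omega
    have e2 : ell (2*d-4) (a-4) (b-4) = Nat.dist a b := by simp only [ell, Nat.dist]; omega
    simp only [cost, e1, e2, Nat.odd_iff, Nat.dist]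
    split_ifs <;> omega

lemma arith2 (d j k : ℕ) (hd2 : 2 ∣ d) (hd4 : 4 ≤ d)
    (hj : (3 ≤ j ∧ j ≤ d) ∨ (d + 3 ≤ j ∧ j ≤ 2*d))
    (hk : (3 ≤ k ∧ k ≤ d) ∨ (d + 3 ≤ k ∧ k ≤ 2*d))
    (hjk : j ≠ k)
    (heq : cost (2*d) d j (d + 2) + cost (2*d) d (d + 1) k
      = cost (2*d - 4) (d - 2) (relabel d j) (relabel d k) + 1) :
    (j + (if j ≤ d then 0 else 1) + (k + (if k ≤ d then 0 else 1))) % 2 = 0 := by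
  rcases hj with ⟨hj1, hj2⟩ | ⟨hj1, hj2⟩ <;> rcases hk with ⟨hk1, hk2⟩ | ⟨hk1, hk2⟩
  · rw [if_pos hj2, if_pos hk2]
    rw [relabel, if_pos hj2, relabel, if_pos hk2] at heq
    have E1 : ell (2*d) j (d+2) = d+2-j := by simp only [ell, Nat.dist]; omega
    have E2 : ell (2*d) (d+1) k = d+1-k := by simp only [ell, Nat.dist]; omega
    have E3 : ell (2*d-4) (j-2) (k-2) = Nat.dist j k := by
      simp only [ell, Nat.dist]; omega
    rw [cost, cost, cost, E1, E2, E3] at heq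
    simp only [Nat.odd_iff, Nat.dist] at heq
    split_ifs at heq <;> omega
  · rw [if_pos hj2, if_neg (by omega)]
    rw [relabel, if_pos hj2, relabel, if_neg (by omega)] at heq
    have E1 : ell (2*d) j (d+2) = d+2-j := by simp only [ell, Nat.dist]; omega
    have E2 : ell (2*d) (d+1) k = k-(d+1) := by simp only [ell, Nat.dist]; omega
    rcases le_or_gt (k-j) d with hs | hs
    · have E3 : ell (2*d-4) (j-2) (k-4) = k-j-2 := by simp only [ell, Nat.dist]; omega
      rw [cost, cost, cost, E1, E2, E3] at heq
      simp only [Nat.odd_iff] at heq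
      split_ifs at heq <;> omega
    · have E3 : ell (2*d-4) (j-2) (k-4) = 2*d-2-(k-j) := by simp only [ell, Nat.dist]; omega
      rw [cost, cost, cost, E1, E2, E3] at heq
      simp only [Nat.odd_iff] at heq
      split_ifs at heq <;> omega
  · rw [if_neg (by omega), if_pos hk2]
    rw [relabel, if_neg (by omega), relabel, if_pos hk2] at heq
    have E1 : ell (2*d) j (d+2) = j-(d+2) := by simp only [ell, Nat.dist]; omega
    have E2 : ell (2*d) (d+1) k = d+1-k := by simp only [ell, Nat.dist]; omega
    rcases le_or_gt (j-k) d with hs | hs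
    · have E3 : ell (2*d-4) (j-4) (k-2) = j-k-2 := by simp only [ell, Nat.dist]; omega
      rw [cost, cost, cost, E1, E2, E3] at heq
      simp only [Nat.odd_iff] at heq
      split_ifs at heq <;> omega
    · have E3 : ell (2*d-4) (j-4) (k-2) = 2*d-2-(j-k) := by simp only [ell, Nat.dist]; omega
      rw [cost, cost, cost, E1, E2, E3] at heq
      simp only [Nat.odd_iff] at heq
      split_ifs at heq <;> omega
  · rw [if_neg (by omega), if_neg (by omega)]
    rw [relabel, if_neg (by omega), relabel, if_neg (by omega)] at heq
    have E1 : ell (2*d) j (d+2) = j-(d+2) := by simp only [ell, Nat.dist]; omega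
    have E2 : ell (2*d) (d+1) k = k-(d+1) := by simp only [ell, Nat.dist]; omega
    have E3 : ell (2*d-4) (j-4) (k-4) = Nat.dist j k := by
      simp only [ell, Nat.dist]; omega
    rw [cost, cost, cost, E1, E2, E3] at heq
    simp only [Nat.odd_iff, Nat.dist] at heq
    split_ifs at heq <;> omega

open CEaux

/-- If a Hamiltonian cycle (on vertices `1,…,n`, realized as `ZMod n`) contains the five
edges `{j,d+2}, {d+2,2}, {2,1}, {1,d+1}, {d+1,k}` and
`c_{j,d+2} + c_{d+1,k} − c'_{j',k'} = 1`, then the cycle contains an edge `{a,b}` with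
`a, b ∉ {1, 2, d+1, d+2}` such that `c'_{a',b'} = c_{a,b} − 2`. -/
theorem contraction_equality_needs_cheaper_edge
    (n : ℕ) (hn : 8 ≤ n) (h4 : 4 ∣ n) (d : ℕ) (hd : d = n / 2)
    (j k : ℕ)
    (hj : (3 ≤ j ∧ j ≤ d) ∨ (d + 3 ≤ j ∧ j ≤ n))
    (hk : (3 ≤ k ∧ k ≤ d) ∨ (d + 3 ≤ k ∧ k ≤ n))
    (hjk : j ≠ k)
    (v : ZMod n) (w : (⊤ : SimpleGraph (ZMod n)).Walk v v)
    (hw : w.IsHamiltonianCycle)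
    (he1 : s((j : ZMod n), ((d + 2 : ℕ) : ZMod n)) ∈ w.edges)
    (he2 : s(((d + 2 : ℕ) : ZMod n), (2 : ZMod n)) ∈ w.edges)
    (he3 : s((2 : ZMod n), (1 : ZMod n)) ∈ w.edges)
    (he4 : s((1 : ZMod n), ((d + 1 : ℕ) : ZMod n)) ∈ w.edges)
    (he5 : s(((d + 1 : ℕ) : ZMod n), (k : ZMod n)) ∈ w.edges)
    (heq : (cost n d j (d + 2) : ℤ) + (cost n d (d + 1) k : ℤ)
      - (cost (n - 4) (d - 2) (relabel d j) (relabel d k) : ℤ) = 1) :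
    ∃ a b : ℕ, 1 ≤ a ∧ a ≤ n ∧ 1 ≤ b ∧ b ≤ n ∧
      a ∉ ({1, 2, d + 1, d + 2} : Set ℕ) ∧ b ∉ ({1, 2, d + 1, d + 2} : Set ℕ) ∧
      s((a : ZMod n), (b : ZMod n)) ∈ w.edges ∧
      (cost (n - 4) (d - 2) (relabel d a) (relabel d b) : ℤ) = (cost n d a b : ℤ) - 2 := by
  classical
  haveI : NeZero n := ⟨by omega⟩
  have hn2d : n = 2 * d := by omega
  have hd4 : 4 ≤ d := by omega
  have hd2 : 2 ∣ d := by omega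
  by_contra hcon
  push_neg at hcon
  have hjb : 1 ≤ j ∧ j ≤ n := by rcases hj with ⟨h1, h2⟩ | ⟨h1, h2⟩ <;> omega
  have hkb : 1 ≤ k ∧ k ≤ n := by rcases hk with ⟨h1, h2⟩ | ⟨h1, h2⟩ <;> omega
  -- normalized special edges
  have he2' : s(((d + 2 : ℕ) : ZMod n), ((2 : ℕ) : ZMod n)) ∈ w.edges := by exact_mod_cast he2
  have he3' : s(((2 : ℕ) : ZMod n), ((1 : ℕ) : ZMod n)) ∈ w.edges := by exact_mod_cast he3
  have he4' : s(((1 : ℕ) : ZMod n), ((d + 1 : ℕ) : ZMod n)) ∈ w.edges := by exact_mod_cast he4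
  -- pairwise distinctness of the five special edges
  have hne12 : s((j : ZMod n), ((d + 2 : ℕ) : ZMod n)) ≠ s(((d + 2 : ℕ) : ZMod n), ((2 : ℕ) : ZMod n)) :=
    sym2_ne n j (d+2) (d+2) 2 (by omega) (by omega) (by omega) (by omega) (by omega) (by omega) (by omega) (by omega) (by omega)
  have hne13 : s((j : ZMod n), ((d + 2 : ℕ) : ZMod n)) ≠ s(((2 : ℕ) : ZMod n), ((1 : ℕ) : ZMod n)) :=
    sym2_ne n j (d+2) 2 1 (by omega) (by omega) (by omega) (by omega) (by omega) (by omega) (by omega) (by omega) (by omega)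
  have hne14 : s((j : ZMod n), ((d + 2 : ℕ) : ZMod n)) ≠ s(((1 : ℕ) : ZMod n), ((d + 1 : ℕ) : ZMod n)) :=
    sym2_ne n j (d+2) 1 (d+1) (by omega) (by omega) (by omega) (by omega) (by omega) (by omega) (by omega) (by omega) (by omega)
  have hne15 : s((j : ZMod n), ((d + 2 : ℕ) : ZMod n)) ≠ s(((d + 1 : ℕ) : ZMod n), (k : ZMod n)) :=
    sym2_ne n j (d+2) (d+1) k (by omega) (by omega) (by omega) (by omega) (by omega) (by omega) (by omega) (by omega) (by omega)
  have hne23 : s(((d + 2 : ℕ) : ZMod n), ((2 : ℕ) : ZMod n)) ≠ s(((2 : ℕ) : ZMod n), ((1 : ℕ) : ZMod n)) :=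
    sym2_ne n (d+2) 2 2 1 (by omega) (by omega) (by omega) (by omega) (by omega) (by omega) (by omega) (by omega) (by omega)
  have hne24 : s(((d + 2 : ℕ) : ZMod n), ((2 : ℕ) : ZMod n)) ≠ s(((1 : ℕ) : ZMod n), ((d + 1 : ℕ) : ZMod n)) :=
    sym2_ne n (d+2) 2 1 (d+1) (by omega) (by omega) (by omega) (by omega) (by omega) (by omega) (by omega) (by omega) (by omega)
  have hne25 : s(((d + 2 : ℕ) : ZMod n), ((2 : ℕ) : ZMod n)) ≠ s(((d + 1 : ℕ) : ZMod n), (k : ZMod n)) :=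
    sym2_ne n (d+2) 2 (d+1) k (by omega) (by omega) (by omega) (by omega) (by omega) (by omega) (by omega) (by omega) (by omega)
  have hne34 : s(((2 : ℕ) : ZMod n), ((1 : ℕ) : ZMod n)) ≠ s(((1 : ℕ) : ZMod n), ((d + 1 : ℕ) : ZMod n)) :=
    sym2_ne n 2 1 1 (d+1) (by omega) (by omega) (by omega) (by omega) (by omega) (by omega) (by omega) (by omega) (by omega)
  have hne35 : s(((2 : ℕ) : ZMod n), ((1 : ℕ) : ZMod n)) ≠ s(((d + 1 : ℕ) : ZMod n), (k : ZMod n)) :=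
    sym2_ne n 2 1 (d+1) k (by omega) (by omega) (by omega) (by omega) (by omega) (by omega) (by omega) (by omega) (by omega)
  have hne45 : s(((1 : ℕ) : ZMod n), ((d + 1 : ℕ) : ZMod n)) ≠ s(((d + 1 : ℕ) : ZMod n), (k : ZMod n)) :=
    sym2_ne n 1 (d+1) (d+1) k (by omega) (by omega) (by omega) (by omega) (by omega) (by omega) (by omega) (by omega) (by omega)
  set E1 : Sym2 (ZMod n) := s((j : ZMod n), ((d + 2 : ℕ) : ZMod n)) with hE1
  set E2 : Sym2 (ZMod n) := s(((d + 2 : ℕ) : ZMod n), ((2 : ℕ) : ZMod n)) with hE2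
  set E3 : Sym2 (ZMod n) := s(((2 : ℕ) : ZMod n), ((1 : ℕ) : ZMod n)) with hE3
  set E4 : Sym2 (ZMod n) := s(((1 : ℕ) : ZMod n), ((d + 1 : ℕ) : ZMod n)) with hE4
  set E5 : Sym2 (ZMod n) := s(((d + 1 : ℕ) : ZMod n), (k : ZMod n)) with hE5
  set T : Finset (Sym2 (ZMod n)) := {E1, E2, E3, E4, E5} with hT
  have hnodup : w.edges.Nodup := hw.isCycle.isCircuit.isTrail.edges_nodup
  have hsub : T ⊆ w.edges.toFinset := by
    intro e he
    rw [hT] at he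
    simp only [Finset.mem_insert, Finset.mem_singleton] at he
    rw [List.mem_toFinset]
    rcases he with rfl | rfl | rfl | rfl | rfl
    · exact he1
    · exact he2'
    · exact he3'
    · exact he4'
    · exact he5
  -- degree-two argument
  have deg2 : ∀ (z : ZMod n) (eA eB eC : Sym2 (ZMod n)), eA ∈ w.edges → eB ∈ w.edges →
      eC ∈ w.edges → eA ≠ eB → eC ≠ eA → eC ≠ eB → z ∈ eA → z ∈ eB → z ∈ eC → False := by
    intro z eA eB eC hA hB hC hAB hCA hCB hzA hzB hzC
    have h3 := three_le_countP (p := fun e => decide (z ∈ e)) hnodup hC hA hB hCA hCB hAB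
      (by simpa using hzC) (by simpa using hzA) (by simpa using hzB)
    have h2 := ham_countP_le_two hw z
    omega
  -- the key pointwise fact on non-special edges
  have hkey : ∀ e ∈ w.edges.toFinset \ T, gE n d e = 1 := by
    intro e
    refine Sym2.ind (fun x y hin => ?_) e
    rw [Finset.mem_sdiff, List.mem_toFinset] at hin
    obtain ⟨hmem, hnotT⟩ := hin
    rw [hT] at hnotT
    simp only [Finset.mem_insert, Finset.mem_singleton, not_or] at hnotT
    obtain ⟨hT1, hT2, hT3, hT4, hT5⟩ := hnotT
    have hxy : x ≠ y := by
      have := SimpleGraph.Walk.adj_of_mem_edges w hmem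
      simpa using this
    obtain ⟨hax1, hax2⟩ := lab_bounds n x
    obtain ⟨hby1, hby2⟩ := lab_bounds n y
    have hax : ((lab n x : ℕ) : ZMod n) = x := cast_lab n x
    have hby : ((lab n y : ℕ) : ZMod n) = y := cast_lab n y
    -- x and y avoid the four contracted vertices
    have hxne : ∀ m : ℕ, ∀ eA eB : Sym2 (ZMod n), eA ∈ w.edges → eB ∈ w.edges → eA ≠ eB →
        s(x, y) ≠ eA → s(x, y) ≠ eB → ((m : ℕ) : ZMod n) ∈ eA → ((m : ℕ) : ZMod n) ∈ eB →
        x ≠ ((m : ℕ) : ZMod n) ∧ y ≠ ((m : ℕ) : ZMod n) := by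
      intro m eA eB hA hB hAB hxA hxB hmA hmB
      constructor <;> intro hcontr
      · exact deg2 ((m : ℕ) : ZMod n) eA eB s(x, y) hA hB hmem hAB hxA hxB hmA hmB
          (by rw [← hcontr]; exact Sym2.mem_mk_left x y)
      · exact deg2 ((m : ℕ) : ZMod n) eA eB s(x, y) hA hB hmem hAB hxA hxB hmA hmB
          (by rw [← hcontr]; exact Sym2.mem_mk_right x y)
    have h1 := hxne 1 E3 E4 he3' he4' hne34 hT3 hT4
      (by rw [hE3]; exact Sym2.mem_mk_right _ _) (by rw [hE4]; exact Sym2.mem_mk_left _ _)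
    have h2 := hxne 2 E2 E3 he2' he3' hne23 hT2 hT3
      (by rw [hE2]; exact Sym2.mem_mk_right _ _) (by rw [hE3]; exact Sym2.mem_mk_left _ _)
    have hd1 := hxne (d+1) E4 E5 he4' he5 hne45 hT4 hT5
      (by rw [hE4]; exact Sym2.mem_mk_right _ _) (by rw [hE5]; exact Sym2.mem_mk_left _ _)
    have hd2' := hxne (d+2) E1 E2 he1 he2' hne12 hT1 hT2
      (by rw [hE1]; exact Sym2.mem_mk_right _ _) (by rw [hE2]; exact Sym2.mem_mk_left _ _)
    have hlx : ∀ m : ℕ, x ≠ ((m : ℕ) : ZMod n) → lab n x ≠ m := by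
      intro m hne hcontr
      exact hne (by rw [← hax, hcontr])
    have hly : ∀ m : ℕ, y ≠ ((m : ℕ) : ZMod n) → lab n y ≠ m := by
      intro m hne hcontr
      exact hne (by rw [← hby, hcontr])
    have ha1 : lab n x ≠ 1 := hlx 1 h1.1
    have ha2 : lab n x ≠ 2 := hlx 2 h2.1
    have had1 : lab n x ≠ d + 1 := hlx (d+1) hd1.1
    have had2 : lab n x ≠ d + 2 := hlx (d+2) hd2'.1
    have hb1 : lab n y ≠ 1 := hly 1 h1.2
    have hb2 : lab n y ≠ 2 := hly 2 h2.2
    have hbd1 : lab n y ≠ d + 1 := hly (d+1) hd1.2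
    have hbd2 : lab n y ≠ d + 2 := hly (d+2) hd2'.2
    have haS : (3 ≤ lab n x ∧ lab n x ≤ d) ∨ (d + 3 ≤ lab n x ∧ lab n x ≤ 2*d) := by omega
    have hbS : (3 ≤ lab n y ∧ lab n y ≤ d) ∨ (d + 3 ≤ lab n y ∧ lab n y ≤ 2*d) := by omega
    have hab : lab n x ≠ lab n y := by
      intro hcontr
      exact hxy (by rw [← hax, ← hby, hcontr])
    have hedge : s(((lab n x : ℕ) : ZMod n), ((lab n y : ℕ) : ZMod n)) ∈ w.edges := by
      rw [hax, hby]; exact hmem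
    have hcost := hcon (lab n x) (lab n y) hax1 hax2 hby1 hby2
      (by simp only [Set.mem_insert_iff, Set.mem_singleton_iff]; push_neg; omega)
      (by simp only [Set.mem_insert_iff, Set.mem_singleton_iff]; push_neg; omega)
      hedge
    have hne2 : cost (2*d) d (lab n x) (lab n y)
        ≠ cost (2*d - 4) (d - 2) (relabel d (lab n x)) (relabel d (lab n y)) + 2 := by
      rw [← hn2d]
      intro hnat
      exact hcost (by omega)
    have hchi_ne : chi d (lab n x) ≠ chi d (lab n y) := by
      intro hcc
      apply hne2
      apply arith1 d (lab n x) (lab n y) hd2 hd4 haS hbS hab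
      unfold CEaux.chi at hcc
      split_ifs at hcc ⊢ <;> omega
    have hchilt : chi d (lab n x) < 2 ∧ chi d (lab n y) < 2 := by
      constructor <;> exact Nat.mod_lt _ (by omega)
    simp only [gE, Sym2.lift_mk, F]
    have : (chi d (lab n x) = 0 ∧ chi d (lab n y) = 1)
        ∨ (chi d (lab n x) = 1 ∧ chi d (lab n y) = 0) := by omega
    rcases this with ⟨hu, hv⟩ | ⟨hu, hv⟩ <;> rw [hu, hv] <;> decide
  -- total parity sum is zero
  have hg : ∀ a b : ZMod n, gE n d s(a, b) = F n d a + F n d b := fun a b => rfl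
  have hsum0 : ∑ e ∈ w.edges.toFinset, gE n d e = 0 := by
    rw [List.sum_toFinset _ hnodup]
    rw [walk_parity_sum (F n d) (gE n d) hg w]
    exact CharTwo.add_self_eq_zero _
  have hsplit := Finset.sum_sdiff (f := gE n d) hsub
  -- sum over the five special edges
  have hm1 : E1 ∉ ({E2, E3, E4, E5} : Finset (Sym2 (ZMod n))) := by
    simp only [Finset.mem_insert, Finset.mem_singleton]
    push_neg
    exact ⟨hne12, hne13, hne14, hne15⟩
  have hm2 : E2 ∉ ({E3, E4, E5} : Finset (Sym2 (ZMod n))) := by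
    simp only [Finset.mem_insert, Finset.mem_singleton]
    push_neg
    exact ⟨hne23, hne24, hne25⟩
  have hm3 : E3 ∉ ({E4, E5} : Finset (Sym2 (ZMod n))) := by
    simp only [Finset.mem_insert, Finset.mem_singleton]
    push_neg
    exact ⟨hne34, hne35⟩
  have hm4 : E4 ∉ ({E5} : Finset (Sym2 (ZMod n))) := by
    simp only [Finset.mem_singleton]
    exact hne45
  have hTsum : ∑ e ∈ T, gE n d e = F n d (j : ZMod n) + F n d (k : ZMod n) := by
    rw [hT]
    rw [Finset.sum_insert hm1, Finset.sum_insert hm2, Finset.sum_insert hm3,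
        Finset.sum_insert hm4, Finset.sum_singleton]
    rw [hE1, hE2, hE3, hE4, hE5]
    rw [hg, hg, hg, hg, hg]
    linear_combination (CharTwo.add_self_eq_zero (F n d ((d+2 : ℕ) : ZMod n)))
      + (CharTwo.add_self_eq_zero (F n d ((2 : ℕ) : ZMod n)))
      + (CharTwo.add_self_eq_zero (F n d ((1 : ℕ) : ZMod n)))
      + (CharTwo.add_self_eq_zero (F n d ((d+1 : ℕ) : ZMod n)))
  -- cardinality of the rest
  have hlen : w.edges.length = n := by
    rw [SimpleGraph.Walk.length_edges, hw.length_eq, ZMod.card]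
  have hcardE : w.edges.toFinset.card = n := by
    rw [List.toFinset_card_of_nodup hnodup, hlen]
  have hcardT : T.card = 5 := by
    rw [hT]
    rw [Finset.card_insert_of_notMem hm1, Finset.card_insert_of_notMem hm2,
        Finset.card_insert_of_notMem hm3, Finset.card_insert_of_notMem hm4,
        Finset.card_singleton]
  have hcardR : (w.edges.toFinset \ T).card = n - 5 := by
    rw [Finset.card_sdiff_of_subset hsub, hcardE, hcardT]
  have hrest : ∑ e ∈ w.edges.toFinset \ T, gE n d e = ((n - 5 : ℕ) : ZMod 2) := by
    rw [Finset.sum_congr rfl hkey, Finset.sum_const, hcardR, nsmul_eq_mul, mul_one]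
  have hodd : ((n - 5 : ℕ) : ZMod 2) = 1 := by
    obtain ⟨t, ht⟩ : ∃ t, n - 5 = 2 * t + 1 := ⟨(n - 6) / 2, by omega⟩
    have h2 : (2 : ZMod 2) = 0 := by decide
    rw [ht]
    push_cast
    rw [h2]
    ring
  have hFsum : (1 : ZMod 2) + (F n d (j : ZMod n) + F n d (k : ZMod n)) = 0 := by
    rw [← hodd, ← hrest, ← hTsum, hsplit, hsum0]
  -- from heq, the chi classes of j and k agree
  have hnat : cost n d j (d + 2) + cost n d (d + 1) k
      = cost (n - 4) (d - 2) (relabel d j) (relabel d k) + 1 := by omega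
  rw [hn2d] at hnat
  have hjS : (3 ≤ j ∧ j ≤ d) ∨ (d + 3 ≤ j ∧ j ≤ 2*d) := by omega
  have hkS : (3 ≤ k ∧ k ≤ d) ∨ (d + 3 ≤ k ∧ k ≤ 2*d) := by omega
  have harith2 := arith2 d j k hd2 hd4 hjS hkS hjk hnat
  have hchijk : chi d j = chi d k := by
    unfold CEaux.chi
    split_ifs at harith2 ⊢ <;> omega
  have hFj : F n d (j : ZMod n) = ((chi d j : ℕ) : ZMod 2) := by
    rw [F, lab_cast n j hjb.1 hjb.2]
  have hFk : F n d (k : ZMod n) = ((chi d k : ℕ) : ZMod 2) := by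
    rw [F, lab_cast n k hkb.1 hkb.2]
  rw [hFj, hFk, hchijk, CharTwo.add_self_eq_zero] at hFsum
  simp at hFsum
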